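/- The braided ASEP jump rates out of any bond sum to one: for all integers k1 ≥ 0 and all integers m, k2, Σ_{l2=0}^{k1} p_m(k1, k2; l2) = 1, where p_m(k1,k2;l2) := binom_{q²}(k1,l2) · (q^{2(m−k2)}; q^{−2})_{k1−l2} · q^{2(m−k2−k1+l2) l2}. (Equivalently, the matrix entries of the fused Hecke element Σ_1 acting on two sites with k1 and k2 particles form a probability distribution over the outcomes l2.) -/

import Mathlib

open BigOperators Finset

noncomputable section

namespace Stmt11

/-- The `q²`-deformed integer `[n]_{q²} = (1 − q^{2n})/(1 − q²)`. -/
def qInt (q : ℝ) (n : ℕ) : ℝ := (1 - q ^ (2 * n)) / (1 - q ^ 2)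

/-- The `q²`-deformed factorial `[n]_{q²}! = [1]_{q²} ⋯ [n]_{q²}`, with `[0]_{q²}! = 1`. -/
def qFact (q : ℝ) : ℕ → ℝ
  | 0 => 1
  | n + 1 => qFact q n * qInt q (n + 1)

/-- The `q²`-deformed binomial coefficient, equal to `0` when `k > n`. -/
def qBinom (q : ℝ) (n k : ℕ) : ℝ :=
  if k ≤ n then qFact q n / (qFact q k * qFact q (n - k)) else 0

/-- The Pochhammer symbol `(a;p)_n = ∏_{i=0}^{n−1} (1 − a pⁱ)`, with `(a;p)_0 = 1`. -/
def qPoch (a p : ℝ) (n : ℕ) : ℝ := ∏ i ∈ Finset.range n, (1 - a * p ^ i)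

/-- The braided ASEP jump rate
`p_m(k1,k2;l2) = binom_{q²}(k1,l2) (q^{2(m−k2)};q^{−2})_{k1−l2} q^{2(m−k2−k1+l2)l2}`
when `0 ≤ l2 ≤ k1`, and `0` otherwise.  Here `m, k2, l2` range over the integers
and `k1` over the naturals. -/
def pRate (q : ℝ) (m k2 : ℤ) (k1 : ℕ) (l2 : ℤ) : ℝ :=
  if 0 ≤ l2 ∧ l2 ≤ (k1 : ℤ) then
    qBinom q k1 l2.toNat *
      qPoch (q ^ ((2 : ℤ) * (m - k2))) (q ^ ((-2 : ℤ))) (k1 - l2.toNat) *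
      q ^ ((2 : ℤ) * (m - k2 - (k1 : ℤ) + l2) * l2)
  else 0


variable {q : ℝ}

lemma qsq_lt_one (hq0 : 0 < q) (hq1 : q < 1) : q ^ 2 < 1 := by nlinarith

lemma qInt_pos (hq0 : 0 < q) (hq1 : q < 1) (n : ℕ) : 0 < qInt q (n + 1) := by
  have h1 : q ^ (2 * (n + 1)) < 1 := pow_lt_one₀ hq0.le hq1 (by omega)
  have h2 : q ^ 2 < 1 := qsq_lt_one hq0 hq1
  exact div_pos (by linarith) (by linarith)

lemma qFact_pos (hq0 : 0 < q) (hq1 : q < 1) (n : ℕ) : 0 < qFact q n := by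
  induction n with
  | zero => norm_num [qFact]
  | succ n ih => exact mul_pos ih (qInt_pos hq0 hq1 n)

lemma qFact_ne (hq0 : 0 < q) (hq1 : q < 1) (n : ℕ) : qFact q n ≠ 0 :=
  (qFact_pos hq0 hq1 n).ne'

lemma qInt_split (hq0 : 0 < q) (hq1 : q < 1) {n l : ℕ} (h : l ≤ n) :
    qInt q (n + 1) = q ^ (2 * (l + 1)) * qInt q (n - l) + qInt q (l + 1) := by
  have ht : (1 : ℝ) - q ^ 2 ≠ 0 := by have := qsq_lt_one hq0 hq1; linarith
  have hkey : q ^ (2 * l) * q ^ (2 * (n - l)) = q ^ (2 * n) := by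
    rw [← pow_add]; congr 1; omega
  unfold qInt
  field_simp
  linear_combination (q ^ 2) * hkey

lemma qPascal (hq0 : 0 < q) (hq1 : q < 1) {n l : ℕ} (h : l ≤ n) :
    qBinom q (n + 1) (l + 1) = q ^ (2 * (l + 1)) * qBinom q n (l + 1) + qBinom q n l := by
  by_cases hl : l + 1 ≤ n
  · have h1 : (n + 1) - (l + 1) = (n - (l + 1)) + 1 := by omega
    have h2 : n - l = (n - (l + 1)) + 1 := by omega
    unfold qBinom
    rw [if_pos (by omega), if_pos hl, if_pos h, h1, h2]
    have e1 := qInt_split hq0 hq1 h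
    have e2 : qFact q (n + 1) = qFact q n * qInt q (n + 1) := rfl
    have e3 : qFact q (l + 1) = qFact q l * qInt q (l + 1) := rfl
    have e4 : qFact q ((n - (l+1)) + 1) = qFact q (n - (l+1)) * qInt q (n - (l+1) + 1) := rfl
    have h5 : n - (l+1) + 1 = n - l := by omega
    rw [e2, e1, e3, e4, h5]
    have n1 := qFact_ne hq0 hq1 n
    have n2 := qFact_ne hq0 hq1 l
    have n3 := qFact_ne hq0 hq1 (n - (l+1))
    have n4 := (qInt_pos hq0 hq1 l).ne'
    have n5 : qInt q (n - l) ≠ 0 := by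
      rw [h2]; exact (qInt_pos hq0 hq1 _).ne'
    field_simp
  · have hln : l = n := by omega
    subst hln
    unfold qBinom
    rw [if_pos le_rfl, if_neg (by omega), if_pos le_rfl]
    have n2 := qFact_ne hq0 hq1 l
    have n3 : qFact q l * qInt q (l + 1) ≠ 0 := mul_ne_zero n2 (qInt_pos hq0 hq1 l).ne'
    simp only [Nat.sub_self, mul_zero, add_zero, qFact, mul_one]
    rw [div_self n3, div_self n2]
    norm_num

lemma qBinom_zero (hq0 : 0 < q) (hq1 : q < 1) (n : ℕ) : qBinom q n 0 = 1 := by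
  unfold qBinom
  rw [if_pos (Nat.zero_le n), Nat.sub_zero]
  show qFact q n / (1 * qFact q n) = 1
  rw [one_mul, div_self (qFact_ne hq0 hq1 n)]

lemma qBinom_self (hq0 : 0 < q) (hq1 : q < 1) (n : ℕ) : qBinom q n n = 1 := by
  unfold qBinom
  rw [if_pos le_rfl, Nat.sub_self]
  show qFact q n / (qFact q n * 1) = 1
  rw [mul_one, div_self (qFact_ne hq0 hq1 n)]

lemma qBinom_of_gt {n k : ℕ} (h : n < k) : qBinom q n k = 0 := by
  unfold qBinom; rw [if_neg (by omega)]

/-- The summand in the stochasticity identity. -/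
def T (q a : ℝ) (n l : ℕ) : ℝ :=
  qBinom q n l * qPoch a (q ^ 2)⁻¹ (n - l) * (a ^ l * ((q ^ 2)⁻¹) ^ ((n - l) * l))

lemma key (hq0 : 0 < q) (hq1 : q < 1) (a : ℝ) (n : ℕ) :
    ∑ l ∈ Finset.range (n + 1), T q a n l = 1 := by
  induction n with
  | zero => simp [T, qBinom, qFact, qPoch]
  | succ n ih =>
    have hq2 : q ^ 2 ≠ 0 := by positivity
    have htr : q ^ 2 * (q ^ 2)⁻¹ = 1 := mul_inv_cancel₀ hq2
    have main : ∀ i ∈ Finset.range (n + 1),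
        T q a (n + 1) (i + 1)
          = T q a n (i + 1) * (1 - a * ((q ^ 2)⁻¹) ^ (n - (i + 1)))
            + T q a n i * (a * ((q ^ 2)⁻¹) ^ (n - i)) := by
      intro i hi
      rw [mem_range] at hi
      rcases Nat.lt_or_ge i n with hin | hin
      · obtain ⟨d, rfl⟩ : ∃ d, n = i + 1 + d := ⟨n - (i + 1), by omega⟩
        unfold T
        have e1 : i + 1 + d + 1 - (i + 1) = d + 1 := by omega
        have e2 : i + 1 + d - (i + 1) = d := by omega
        have e3 : i + 1 + d - i = d + 1 := by omega
        rw [e1, e2, e3]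
        have hp : qPoch a (q ^ 2)⁻¹ (d + 1)
            = qPoch a (q ^ 2)⁻¹ d * (1 - a * ((q ^ 2)⁻¹) ^ d) := by
          unfold qPoch; rw [prod_range_succ]
        have hPas := qPascal hq0 hq1 (show i ≤ i + 1 + d by omega)
        have hq3 : q ^ (2 * (i + 1)) * ((q ^ 2)⁻¹) ^ (i + 1) = 1 := by
          rw [pow_mul, ← mul_pow, htr, one_pow]
        rw [hPas, hp]
        linear_combination (qBinom q (i + 1 + d) (i + 1) * qPoch a (q ^ 2)⁻¹ d *
          (1 - a * ((q ^ 2)⁻¹) ^ d) * a ^ (i + 1) * ((q ^ 2)⁻¹) ^ (d * (i + 1))) * hq3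
      · have hie : i = n := by omega
        subst hie
        unfold T
        rw [show i + 1 - (i + 1) = 0 from by omega, show i - (i + 1) = 0 from by omega,
          Nat.sub_self]
        rw [qBinom_self hq0 hq1, qBinom_self hq0 hq1, qBinom_of_gt (Nat.lt_succ_self i)]
        simp [qPoch]
        ring
    have hT0 : T q a (n + 1) 0 = T q a n 0 * (1 - a * ((q ^ 2)⁻¹) ^ (n - 0)) := by
      unfold T
      rw [qBinom_zero hq0 hq1, qBinom_zero hq0 hq1, Nat.sub_zero, Nat.sub_zero,
        mul_zero, mul_zero, pow_zero, pow_zero]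
      unfold qPoch
      rw [prod_range_succ]
      ring
    calc ∑ l ∈ Finset.range (n + 1 + 1), T q a (n + 1) l
        = (∑ i ∈ Finset.range (n + 1), T q a (n + 1) (i + 1)) + T q a (n + 1) 0 :=
          Finset.sum_range_succ' _ (n + 1)
      _ = (∑ i ∈ Finset.range (n + 1),
            (T q a n (i + 1) * (1 - a * ((q ^ 2)⁻¹) ^ (n - (i + 1)))
              + T q a n i * (a * ((q ^ 2)⁻¹) ^ (n - i)))) + T q a (n + 1) 0 := by
          rw [Finset.sum_congr rfl main]
      _ = ((∑ i ∈ Finset.range (n + 1), T q a n (i + 1) * (1 - a * ((q ^ 2)⁻¹) ^ (n - (i + 1))))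
            + ∑ i ∈ Finset.range (n + 1), T q a n i * (a * ((q ^ 2)⁻¹) ^ (n - i)))
            + T q a (n + 1) 0 := by
          rw [Finset.sum_add_distrib]
      _ = ((∑ i ∈ Finset.range n, T q a n (i + 1) * (1 - a * ((q ^ 2)⁻¹) ^ (n - (i + 1))))
            + ∑ i ∈ Finset.range (n + 1), T q a n i * (a * ((q ^ 2)⁻¹) ^ (n - i)))
            + T q a (n + 1) 0 := by
          rw [Finset.sum_range_succ]
          have : T q a n (n + 1) = 0 := by
            unfold T; rw [qBinom_of_gt (Nat.lt_succ_self n)]; ring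
          rw [this]; ring
      _ = ((∑ i ∈ Finset.range n, T q a n (i + 1) * (1 - a * ((q ^ 2)⁻¹) ^ (n - (i + 1))))
            + T q a n 0 * (1 - a * ((q ^ 2)⁻¹) ^ (n - 0)))
            + ∑ i ∈ Finset.range (n + 1), T q a n i * (a * ((q ^ 2)⁻¹) ^ (n - i)) := by
          rw [hT0]; ring
      _ = (∑ l ∈ Finset.range (n + 1), T q a n l * (1 - a * ((q ^ 2)⁻¹) ^ (n - l)))
            + ∑ i ∈ Finset.range (n + 1), T q a n i * (a * ((q ^ 2)⁻¹) ^ (n - i)) := by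
          rw [Finset.sum_range_succ' (fun l => T q a n l * (1 - a * ((q ^ 2)⁻¹) ^ (n - l))) n]
      _ = ∑ l ∈ Finset.range (n + 1),
            (T q a n l * (1 - a * ((q ^ 2)⁻¹) ^ (n - l))
              + T q a n l * (a * ((q ^ 2)⁻¹) ^ (n - l))) := Finset.sum_add_distrib.symm
      _ = ∑ l ∈ Finset.range (n + 1), T q a n l := by
          apply Finset.sum_congr rfl; intro l _; ring
      _ = 1 := ih

/-- **The braided ASEP jump rates sum to one** (stochasticity of the fused Hecke
element `Σ₁`): for all `k1 ≥ 0` and all integers `m, k2`,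
`Σ_{l2=0}^{k1} p_m(k1,k2;l2) = 1`. -/
theorem braided_rates_sum_to_one (q : ℝ) (hq0 : 0 < q) (hq1 : q < 1)
    (m k2 : ℤ) (k1 : ℕ) :
    ∑ l2 ∈ Finset.range (k1 + 1), pRate q m k2 k1 (l2 : ℤ) = 1 := by
  have hqne : q ≠ 0 := hq0.ne'
  rw [← key hq0 hq1 (q ^ ((2 : ℤ) * (m - k2))) k1]
  apply Finset.sum_congr rfl
  intro l hl
  rw [mem_range] at hl
  have hl' : l ≤ k1 := by omega
  unfold pRate T
  rw [if_pos ⟨Int.natCast_nonneg l, by exact_mod_cast hl'⟩, Int.toNat_natCast]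
  have hbase : (q : ℝ) ^ ((-2 : ℤ)) = (q ^ 2)⁻¹ := by
    rw [zpow_neg]; norm_cast
  have hpow : (q : ℝ) ^ ((2 : ℤ) * (m - k2 - (k1 : ℤ) + l) * l)
      = (q ^ ((2 : ℤ) * (m - k2))) ^ l * ((q ^ 2)⁻¹) ^ ((k1 - l) * l) := by
    have h1 : ((2 : ℤ) * (m - k2 - (k1 : ℤ) + l) * l)
        = (2 * (m - k2)) * (l : ℤ) + (-2) * (((k1 - l : ℕ) : ℤ) * (l : ℤ)) := by
      push_cast [Nat.cast_sub hl']; ring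
    rw [h1, zpow_add₀ hqne]
    congr 1
    · rw [zpow_mul, zpow_natCast]
    · rw [show ((-2 : ℤ)) * (((k1 - l : ℕ) : ℤ) * (l : ℤ))
          = (-2 : ℤ) * ((((k1 - l) * l : ℕ)) : ℤ) by push_cast; ring,
        zpow_mul, zpow_natCast, hbase]
  rw [hbase, hpow]


end Stmt11

end
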